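/- arXiv:2207.01962 — 2 statements merged into one kernel-verified Lean document; each statement's English description precedes it below -/
import Mathlib

section
/- Let H be a normed space, A : H → H an invertible bounded linear operator and W : H → H a bounded linear operator with ‖A⁻¹W‖ < 1. Suppose a sequence (f̂_k) in H satisfies ‖A f̂_k - W f̂_{k-1}‖ ≤ m‖A‖‖A⁻¹‖η for all k ≥ 1 (with m ≥ 0 and η ≥ 0), and let f_k = (A⁻¹W)^k f̂₀ be the exact iterates with f₀ = f̂₀. Then for all k, ‖f̂_k - f_k‖ ≤ (m‖A‖‖A⁻¹‖²/(1 - ‖A⁻¹W‖))·η. -/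
theorem stmt_6 {H : Type*} [NormedAddCommGroup H] [NormedSpace ℝ H]
    (A : H ≃L[ℝ] H) (W : H →L[ℝ] H) (m η : ℝ) (hm : 0 ≤ m) (hη : 0 ≤ η)
    (hcontr : ‖(A.symm : H →L[ℝ] H).comp W‖ < 1)
    (fh : ℕ → H)
    (hres : ∀ k : ℕ, 1 ≤ k →
      ‖A (fh k) - W (fh (k - 1))‖ ≤ m * ‖(A : H →L[ℝ] H)‖ * ‖(A.symm : H →L[ℝ] H)‖ * η) :
    ∀ k : ℕ, ‖fh k - (((A.symm : H →L[ℝ] H).comp W) ^ k) (fh 0)‖ ≤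
      (m * ‖(A : H →L[ℝ] H)‖ * ‖(A.symm : H →L[ℝ] H)‖ ^ 2 /
        (1 - ‖(A.symm : H →L[ℝ] H).comp W‖)) * η := by
  set B : H →L[ℝ] H := (A.symm : H →L[ℝ] H).comp W with hB
  set r : ℝ := ‖B‖ with hr
  have hr0 : 0 ≤ r := norm_nonneg _
  have h1r : 0 < 1 - r := by linarith
  set c : ℝ := m * ‖(A : H →L[ℝ] H)‖ * ‖(A.symm : H →L[ℝ] H)‖ ^ 2 with hc
  have hc0 : 0 ≤ c := by positivity
  intro k
  induction k with
  | zero =>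
    simp only [pow_zero, ContinuousLinearMap.one_apply, sub_self, norm_zero]
    positivity
  | succ n ih =>
    have key : fh (n + 1) - (B ^ (n + 1)) (fh 0) =
        (A.symm : H →L[ℝ] H) (A (fh (n + 1)) - W (fh n)) + B (fh n - (B ^ n) (fh 0)) := by
      have : (B ^ (n + 1)) (fh 0) = B ((B ^ n) (fh 0)) := by
        rw [pow_succ' B n]; rfl
      rw [this]
      simp [hB, map_sub, ContinuousLinearMap.comp_apply]
    have h1 : ‖(A.symm : H →L[ℝ] H) (A (fh (n + 1)) - W (fh n))‖ ≤
        ‖(A.symm : H →L[ℝ] H)‖ * (m * ‖(A : H →L[ℝ] H)‖ * ‖(A.symm : H →L[ℝ] H)‖ * η) := by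
      refine le_trans ((A.symm : H →L[ℝ] H).le_opNorm _) ?_
      exact mul_le_mul_of_nonneg_left (by simpa using hres (n + 1) (Nat.le_add_left 1 n))
        (norm_nonneg _)
    have h2 : ‖B (fh n - (B ^ n) (fh 0))‖ ≤ r * (c / (1 - r) * η) :=
      le_trans (B.le_opNorm _) (mul_le_mul_of_nonneg_left ih hr0)
    have := norm_add_le ((A.symm : H →L[ℝ] H) (A (fh (n + 1)) - W (fh n)))
      (B (fh n - (B ^ n) (fh 0)))
    rw [key]
    calc ‖(A.symm : H →L[ℝ] H) (A (fh (n + 1)) - W (fh n)) + B (fh n - (B ^ n) (fh 0))‖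
        ≤ ‖(A.symm : H →L[ℝ] H)‖ * (m * ‖(A : H →L[ℝ] H)‖ * ‖(A.symm : H →L[ℝ] H)‖ * η)
          + r * (c / (1 - r) * η) := le_trans this (add_le_add h1 h2)
      _ = c * η + r * (c / (1 - r) * η) := by rw [hc]; ring
      _ ≤ c / (1 - r) * η := le_of_eq (by field_simp; ring)
end

section
/- Let H be a normed space, G : H → H Lipschitz with constant L, Δt > 0 with ΔtL ≤ 1/2, and suppose f̂₁, f̃₁ are exact implicit Euler steps from f̂₀, f̃₀ respectively. If f̂₁' and f̃₁' satisfy ‖f̂₁' - f̂₁‖ ≤ δ and ‖f̃₁' - f̃₁‖ ≤ δ, then ‖f̂₁' - f̃₁'‖ ≤ (1 + 2LΔt)‖f̂₀ - f̃₀‖ + 2δ. -/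
theorem stmt_12 {H : Type*} [NormedAddCommGroup H] [NormedSpace ℝ H]
    (G : H → H) (L Δt δ : ℝ) (hL : 0 ≤ L) (hδ : 0 ≤ δ)
    (hLip : ∀ a b : H, ‖G a - G b‖ ≤ L * ‖a - b‖)
    (hΔt : 0 < Δt) (hstep : Δt * L ≤ 1/2)
    (fh₀ fh₁ ft₀ ft₁ fh₁' ft₁' : H)
    (hfh : fh₁ = fh₀ + Δt • G fh₁)
    (hft : ft₁ = ft₀ + Δt • G ft₁)
    (hfh' : ‖fh₁' - fh₁‖ ≤ δ)
    (hft' : ‖ft₁' - ft₁‖ ≤ δ) :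
    ‖fh₁' - ft₁'‖ ≤ (1 + 2 * L * Δt) * ‖fh₀ - ft₀‖ + 2 * δ := by
  have hdiff : fh₁ - ft₁ = (fh₀ - ft₀) + Δt • (G fh₁ - G ft₁) := by
    conv_lhs => rw [hfh, hft]
    rw [smul_sub]; abel
  have h1 : ‖fh₁ - ft₁‖ ≤ ‖fh₀ - ft₀‖ + Δt * L * ‖fh₁ - ft₁‖ := by
    calc ‖fh₁ - ft₁‖ ≤ ‖fh₀ - ft₀‖ + ‖Δt • (G fh₁ - G ft₁)‖ := by
          rw [hdiff]; exact norm_add_le _ _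
      _ ≤ ‖fh₀ - ft₀‖ + Δt * L * ‖fh₁ - ft₁‖ := by
          rw [norm_smul, Real.norm_of_nonneg hΔt.le, mul_assoc]
          gcongr
          exact hLip _ _
  have h2 : (1 - Δt * L) * ‖fh₁ - ft₁‖ ≤ ‖fh₀ - ft₀‖ := by nlinarith
  have h3 : ‖fh₁ - ft₁‖ ≤ (1 + 2 * L * Δt) * ‖fh₀ - ft₀‖ := by
    have hpos : (0:ℝ) < 1 - Δt * L := by linarith
    have hn : (0:ℝ) ≤ ‖fh₀ - ft₀‖ := norm_nonneg _
    have hfac : (1 - Δt * L) * (1 + 2 * L * Δt) ≥ 1 := by nlinarith [mul_nonneg hΔt.le hL]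
    nlinarith [norm_nonneg (fh₁ - ft₁)]
  calc ‖fh₁' - ft₁'‖ ≤ ‖fh₁' - fh₁‖ + ‖fh₁ - ft₁‖ + ‖ft₁ - ft₁'‖ := by
        have := norm_add₃_le (a := fh₁' - fh₁) (b := fh₁ - ft₁) (c := ft₁ - ft₁')
        simpa using this
    _ ≤ δ + (1 + 2 * L * Δt) * ‖fh₀ - ft₀‖ + δ := by
        gcongr
        rw [norm_sub_rev]; exact hft'
    _ = (1 + 2 * L * Δt) * ‖fh₀ - ft₀‖ + 2 * δ := by ring
end
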